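/- arXiv:2008.03279 — 3 statements merged into one kernel-verified Lean document; each statement's English description precedes it below -/
import Mathlib

section
/- Let G, H, H' be finite digraphs, ξ ∈ H(G,H) and ζ ∈ H(G,H') homomorphisms, and v ∈ V(G) a vertex with Γ_ξ(v) ⊆ Γ_ζ(v). Then Γ_ξ(v) is a proper subset of Γ_ζ(v) if and only if there exist a, b ∈ Γ_ζ(v) such that ab is a proper arc of G and ξ(a)ξ(b) is a proper arc of H. -/
/-- A homomorphism between digraphs `(V, A)` and `(W, B)`:
a map sending every arc to an arc. -/
def IsHom {V W : Type} (A : V → V → Prop) (B : W → W → Prop) (f : V → W) : Prop :=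
  ∀ ⦃v w : V⦄, A v w → B (f v) (f w)

/-- A strict homomorphism: a homomorphism mapping proper arcs to proper arcs. -/
def IsStrictHom {V W : Type} (A : V → V → Prop) (B : W → W → Prop) (f : V → W) : Prop :=
  IsHom A B f ∧ ∀ ⦃v w : V⦄, A v w → v ≠ w → f v ≠ f w

/-- Adjacency in a digraph. -/
def DAdj {V : Type} (A : V → V → Prop) (v w : V) : Prop := A v w ∨ A w v

/-- `v` and `w` are connected in `X`: `v = w` (with `v ∈ X`), or there is a line
`z 0, …, z I` inside `X` connecting them, consecutive members being adjacent. -/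
def ConnIn {V : Type} (A : V → V → Prop) (X : Set V) (v w : V) : Prop :=
  ∃ (I : ℕ) (z : ℕ → V), z 0 = v ∧ z I = w ∧ (∀ i ≤ I, z i ∈ X) ∧
    ∀ i < I, DAdj A (z i) (z (i + 1))

/-- `γ_X(v)`: the set of `w ∈ X` connected with `v` in `X`. -/
def gammaSet {V : Type} (A : V → V → Prop) (X : Set V) (v : V) : Set V :=
  {w | ConnIn A X v w}

/-- `Γ_ξ(v)`: the connectivity component of `v` in the preimage `ξ⁻¹(ξ(v))`. -/
def GammaComp {V W : Type} (A : V → V → Prop) (ξ : V → W) (v : V) : Set V :=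
  gammaSet A {u | ξ u = ξ v} v

/-- The set of homomorphisms `H(G,H)` (as a type). -/
def HomSet {V W : Type} (A : V → V → Prop) (B : W → W → Prop) : Type :=
  {f : V → W // IsHom A B f}

/-- The set of strict homomorphisms `S(G,H)` (as a type). -/
def StrictHomSet {V W : Type} (A : V → V → Prop) (B : W → W → Prop) : Type :=
  {f : V → W // IsStrictHom A B f}

/-- The vertex set of the digraph `G_ξ`: the components `Γ_ξ(v)`, `v ∈ V(G)`. -/
def GVert {V W : Type} (A : V → V → Prop) (ξ : V → W) : Type :=
  {C : Set V // ∃ v, C = GammaComp A ξ v}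

/-- The arc relation of the digraph `G_ξ`. -/
def GArc {V W : Type} (A : V → V → Prop) (ξ : V → W) :
    GVert A ξ → GVert A ξ → Prop :=
  fun C D => ∃ a ∈ C.1, ∃ b ∈ D.1, A a b

/-- The canonical map `π_ξ : G → G_ξ`, `v ↦ Γ_ξ(v)`. -/
def piMap {V W : Type} (A : V → V → Prop) (ξ : V → W) (v : V) : GVert A ξ :=
  ⟨GammaComp A ξ v, v, rfl⟩

/-- `Θ_{G,H'}(ξ)`: the homomorphisms `ζ : G → H'` with `G_ζ = G_ξ`
(equality of the digraphs `G_ζ` and `G_ξ`, i.e. of their vertex sets,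
which determines the arc sets). -/
def ThetaSet {V W W' : Type} (A : V → V → Prop) (B' : W' → W' → Prop)
    (ξ : V → W) : Set (V → W') :=
  {ζ | IsHom A B' ζ ∧
    {C : Set V | ∃ v, C = GammaComp A ζ v} = {C : Set V | ∃ v, C = GammaComp A ξ v}}

/-- `R ⊑_Γ S` with respect to a class `D'` of finite digraphs: a strong Γ-scheme
from `R` to `S` exists, i.e. for every finite digraph `G ∈ D'` an injective map
`ρ_G : H(G,R) → H(G,S)` with `Γ_{ρ_G(ξ)}(v) = Γ_ξ(v)` for all `ξ`, `v`. -/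
def SqGamma (D' : (V : Type) → (V → V → Prop) → Prop)
    {VR VS : Type} (R : VR → VR → Prop) (S : VS → VS → Prop) : Prop :=
  ∀ (V : Type) [Finite V] [Nonempty V] (A : V → V → Prop), D' V A →
    ∃ ρ : HomSet A R → HomSet A S, Function.Injective ρ ∧
      ∀ (ξ : HomSet A R) (v : V), GammaComp A (ρ ξ).1 v = GammaComp A ξ.1 v

/-- The class `T_a`: digraphs whose loop-removed digraph is acyclic,
i.e. every closed walk is trivial. -/
def Ta {V : Type} (A : V → V → Prop) : Prop :=
  ∀ (z : ℕ → V) (I : ℕ), 0 < I →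
    (∀ i < I, A (z i) (z (i + 1)) ∧ z i ≠ z (i + 1)) → z 0 ≠ z I

/-- A poset: a reflexive, antisymmetric, transitive digraph. -/
def IsPosetRel {V : Type} (A : V → V → Prop) : Prop :=
  Reflexive A ∧ AntiSymmetric A ∧ Transitive A

/-- An element of `P^*`: an irreflexive, antisymmetric, transitive digraph. -/
def IsStrictPosetRel {V : Type} (A : V → V → Prop) : Prop :=
  Irreflexive A ∧ AntiSymmetric A ∧ Transitive A

/-- The direct (disjoint) sum of two digraphs. -/
def sumRel {V W : Type} (A : V → V → Prop) (B : W → W → Prop) :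
    V ⊕ W → V ⊕ W → Prop
  | Sum.inl v, Sum.inl w => A v w
  | Sum.inr v, Sum.inr w => B v w
  | _, _ => False

/-- The open neighborhood `N(v)`. -/
def Nbr {Z : Type} (A : Z → Z → Prop) (v : Z) : Set Z :=
  {w | w ≠ v ∧ (A v w ∨ A w v)}

/-- The in-neighborhood `N^in(v)`. -/
def NIn {Z : Type} (A : Z → Z → Prop) (v : Z) : Set Z :=
  {w | w ≠ v ∧ A w v}

/-- The out-neighborhood `N^out(v)`. -/
def NOut {Z : Type} (A : Z → Z → Prop) (v : Z) : Set Z :=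
  {w | w ≠ v ∧ A v w}

/-- `A_r`: the arcs of `R` minus all arcs between `M` and `X`. -/
def ArRel {Z : Type} (A : Z → Z → Prop) (X M : Set Z) : Z → Z → Prop :=
  fun v w => A v w ∧ ¬(v ∈ M ∧ w ∈ X) ∧ ¬(v ∈ X ∧ w ∈ M)

/-- `A_d = { m β(x) : m x ∈ A(R) ∩ (M × X) }`. -/
def AdRel {Z : Type} (A : Z → Z → Prop) (X M : Set Z) (β : Z → Z) : Z → Z → Prop :=
  fun v w => v ∈ M ∧ ∃ x ∈ X, A v x ∧ w = β x

/-- `A_u = { β(x) m : x m ∈ A(R) ∩ (X × M) }`. -/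
def AuRel {Z : Type} (A : Z → Z → Prop) (X M : Set Z) (β : Z → Z) : Z → Z → Prop :=
  fun v w => w ∈ M ∧ ∃ x ∈ X, A x w ∧ v = β x

/-- The rearranged digraph `S`, with `A(S) = A_r ∪ A_d ∪ A_u`. -/
def SRel {Z : Type} (A : Z → Z → Prop) (X M : Set Z) (β : Z → Z) : Z → Z → Prop :=
  fun v w => ArRel A X M v w ∨ AdRel A X M β v w ∨ AuRel A X M β v w

/-- `U_ξ = { v : ξ(v) ∈ T and ξ[N_G(v)] ∩ M ≠ ∅ }` (for `T = X`; with `T = Y`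
this gives `U'_ζ`). -/
def USet {V Z : Type} (AG : V → V → Prop) (T M : Set Z) (ξ : V → Z) : Set V :=
  {v | ξ v ∈ T ∧ ∃ w ∈ Nbr AG v, ξ w ∈ M}

open Classical in
/-- The rearranged homomorphism `ρ_G(ξ)`: `β(ξ(v))` on `U_ξ` and `ξ(v)` elsewhere. -/
noncomputable def rhoMap {V Z : Type} (AG : V → V → Prop) (X M : Set Z) (β : Z → Z)
    (ξ : V → Z) : V → Z :=
  fun v => if v ∈ USet AG X M ξ then β (ξ v) else ξ v

lemma connIn_append {V : Type} {A : V → V → Prop} {X : Set V} {v w w' : V}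
    (h : ConnIn A X v w) (hw' : w' ∈ X) (hadj : DAdj A w w') : ConnIn A X v w' := by
  obtain ⟨I, z, h0, hI, hmem, hadjs⟩ := h
  refine ⟨I + 1, fun i => if i ≤ I then z i else w', by simp [h0], by simp, ?_, ?_⟩
  · intro i hi
    by_cases h : i ≤ I
    · simpa [h] using hmem i h
    · simpa [h] using hw'
  · intro i hi
    rcases Nat.lt_succ_iff_lt_or_eq.mp hi with h | h
    · have h1 : i ≤ I := h.le
      have h2 : i + 1 ≤ I := h
      simpa [h1, h2] using hadjs i h
    · subst h
      simpa [hI] using hadj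

lemma connIn_prefix {V : Type} {A : V → V → Prop} {X : Set V} {v : V}
    {I : ℕ} {z : ℕ → V} (h0 : z 0 = v) (hmem : ∀ i ≤ I, z i ∈ X)
    (hadjs : ∀ i < I, DAdj A (z i) (z (i + 1))) {j : ℕ} (hj : j ≤ I) :
    ConnIn A X v (z j) :=
  ⟨j, z, h0, rfl, fun i hi => hmem i (hi.trans hj), fun i hi => hadjs i (lt_of_lt_of_le hi hj)⟩

lemma mem_gammaComp_self {V W : Type} (A : V → V → Prop) (ξ : V → W) (v : V) :
    v ∈ GammaComp A ξ v :=
  ⟨0, fun _ => v, rfl, rfl, fun _ _ => rfl, fun i hi => absurd hi (Nat.not_lt_zero i)⟩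

lemma gammaComp_mem_val {V W : Type} {A : V → V → Prop} {ξ : V → W} {v w : V}
    (h : w ∈ GammaComp A ξ v) : ξ w = ξ v := by
  obtain ⟨I, z, h0, hI, hmem, _⟩ := h
  have := hmem I le_rfl
  rw [hI] at this
  exact this

/-- For homomorphisms `ξ : G → H`, `ζ : G → H'` and a vertex `v` with
`Γ_ξ(v) ⊆ Γ_ζ(v)`: the inclusion is proper iff there are `a, b ∈ Γ_ζ(v)` such
that `ab` is a proper arc of `G` and `ξ(a)ξ(b)` is a proper arc of `H`. -/
theorem stmt1 {V W W' : Type} [Finite V] [Nonempty V] [Finite W] [Nonempty W]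
    [Finite W'] [Nonempty W']
    (A : V → V → Prop) (B : W → W → Prop) (B' : W' → W' → Prop)
    (ξ : V → W) (ζ : V → W') (hξ : IsHom A B ξ) (hζ : IsHom A B' ζ)
    (v : V) (hsub : GammaComp A ξ v ⊆ GammaComp A ζ v) :
    GammaComp A ξ v ⊂ GammaComp A ζ v ↔
      ∃ a ∈ GammaComp A ζ v, ∃ b ∈ GammaComp A ζ v,
        (A a b ∧ a ≠ b) ∧ (B (ξ a) (ξ b) ∧ ξ a ≠ ξ b) := by
  classical
  constructor
  · rintro ⟨-, hne⟩
    obtain ⟨w, hwζ, hwξ⟩ := Set.not_subset.mp hne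
    obtain ⟨I, z, h0, hI, hmem, hadjs⟩ := hwζ
    -- find the least index leaving Γ_ξ(v)
    have hP : ∃ i, z i ∉ GammaComp A ξ v := ⟨I, by rwa [hI]⟩
    set i := Nat.find hP with hi
    have hiP : z i ∉ GammaComp A ξ v := Nat.find_spec hP
    have hi0 : i ≠ 0 := by
      intro h
      apply hiP
      rw [h, h0]
      exact mem_gammaComp_self A ξ v
    obtain ⟨j, hj⟩ : ∃ j, i = j + 1 := ⟨i - 1, (Nat.succ_pred_eq_of_ne_zero hi0).symm⟩
    have hjmem : z j ∈ GammaComp A ξ v := by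
      by_contra h
      have hle : Nat.find hP ≤ j := Nat.find_le h
      omega
    have hiI : i ≤ I := by
      have hle : Nat.find hP ≤ I := Nat.find_le (by rwa [hI])
      omega
    have hadj : DAdj A (z j) (z (j + 1)) := hadjs j (by omega)
    have hξne : ξ (z j) ≠ ξ (z (j + 1)) := by
      intro heq
      apply hiP
      rw [hj]
      refine connIn_append hjmem ?_ hadj
      have : ξ (z j) = ξ v := gammaComp_mem_val hjmem
      show ξ (z (j + 1)) = ξ v
      rw [← heq, this]
    have hjζ : z j ∈ GammaComp A ζ v := connIn_prefix h0 hmem hadjs (by omega)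
    have hj1ζ : z (j + 1) ∈ GammaComp A ζ v := connIn_prefix h0 hmem hadjs (by omega)
    rcases hadj with harc | harc
    · exact ⟨z j, hjζ, z (j + 1), hj1ζ, ⟨harc, fun h => hξne (by rw [h])⟩,
        hξ harc, hξne⟩
    · exact ⟨z (j + 1), hj1ζ, z j, hjζ, ⟨harc, fun h => hξne (by rw [h])⟩,
        hξ harc, fun h => hξne h.symm⟩
  · rintro ⟨a, ha, b, hb, ⟨-, -⟩, -, hξab⟩
    refine ⟨hsub, fun h => hξab ?_⟩
    have heq : GammaComp A ξ v = GammaComp A ζ v := Set.Subset.antisymm hsub h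
    have ha' : a ∈ GammaComp A ξ v := heq ▸ ha
    have hb' : b ∈ GammaComp A ξ v := heq ▸ hb
    rw [gammaComp_mem_val ha', gammaComp_mem_val hb']
end

section
/- Let G be a finite digraph, H ∈ T_a, and ξ ∈ H(G,H) a homomorphism. If 𝔠₀,…,𝔠_I is a walk in the digraph G_ξ with ι_ξ(𝔠₀) = ι_ξ(𝔠_I), then this walk is trivial, i.e., 𝔠_i = 𝔠₀ for all i. In particular, G_ξ ∈ T_a. -/
section stmt7aux

variable {V W : Type}

lemma dadj_symm {A : V → V → Prop} {v w : V} (h : DAdj A v w) : DAdj A w v :=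
  h.elim Or.inr Or.inl

lemma connIn_self {A : V → V → Prop} {X : Set V} {v : V} (hv : v ∈ X) : ConnIn A X v v :=
  ⟨0, fun _ => v, rfl, rfl, fun _ _ => hv, fun i h => absurd h (Nat.not_lt_zero i)⟩

lemma connIn_mem_right {A : V → V → Prop} {X : Set V} {v w : V} (h : ConnIn A X v w) :
    w ∈ X := by
  obtain ⟨I, z, h0, hI, hX, _⟩ := h
  exact hI ▸ hX I le_rfl

lemma connIn_symm {A : V → V → Prop} {X : Set V} {v w : V} (h : ConnIn A X v w) :
    ConnIn A X w v := by
  obtain ⟨I, z, h0, hI, hX, hadj⟩ := h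
  refine ⟨I, fun i => z (I - i), by simp [hI], by simp [h0],
    fun i _ => hX _ (Nat.sub_le _ _), ?_⟩
  intro i hi
  have h1 : I - i = (I - (i + 1)) + 1 := by omega
  have := hadj (I - (i + 1)) (by omega)
  simp only [h1]
  exact dadj_symm this

lemma connIn_trans {A : V → V → Prop} {X : Set V} {u v w : V}
    (h1 : ConnIn A X u v) (h2 : ConnIn A X v w) : ConnIn A X u w := by
  obtain ⟨I, z, hz0, hzI, hzX, hza⟩ := h1
  obtain ⟨J, y, hy0, hyJ, hyX, hya⟩ := h2
  refine ⟨I + J, fun i => if i < I then z i else y (i - I), ?_, ?_, ?_, ?_⟩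
  · by_cases h : 0 < I
    · simp [h, hz0]
    · have hI0 : I = 0 := by omega
      simp only [h, if_neg]
      rw [hI0] at hzI
      simp [hy0, ← hz0, hI0, ← hzI]
  · have : ¬ I + J < I := by omega
    beta_reduce
    rw [if_neg this, Nat.add_sub_cancel_left, hyJ]
  · intro i _
    by_cases h : i < I
    · beta_reduce; rw [if_pos h]; exact hzX i (le_of_lt h)
    · beta_reduce; rw [if_neg h]; exact hyX (i - I) (by omega)
  · intro i hi
    beta_reduce
    by_cases h1 : i + 1 < I
    · have h2 : i < I := by omega
      rw [if_pos h1, if_pos h2]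
      exact hza i h2
    · by_cases h2 : i < I
      · have hI : i + 1 = I := by omega
        rw [if_pos h2, if_neg h1]
        have : i + 1 - I = 0 := by omega
        rw [this, hy0, ← hzI, ← hI]
        exact hza i h2
      · rw [if_neg h1, if_neg h2]
        have h3 : i + 1 - I = (i - I) + 1 := by omega
        rw [h3]
        exact hya (i - I) (by omega)

lemma gammaComp_mem_fiber {A : V → V → Prop} {ξ : V → W} {v w : V}
    (h : w ∈ GammaComp A ξ v) : ξ w = ξ v := by
  have h' : ConnIn A {u | ξ u = ξ v} v w := h
  exact connIn_mem_right (X := {u | ξ u = ξ v}) h'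

lemma gammaComp_self {A : V → V → Prop} {ξ : V → W} (v : V) : v ∈ GammaComp A ξ v :=
  connIn_self rfl

lemma gammaComp_eq_of_mem {A : V → V → Prop} {ξ : V → W} {v w : V}
    (h : w ∈ GammaComp A ξ v) : GammaComp A ξ w = GammaComp A ξ v := by
  have hfib : ξ w = ξ v := gammaComp_mem_fiber h
  have hset : {u | ξ u = ξ w} = {u | ξ u = ξ v} := by
    ext u; simp [hfib]
  have hΓ : GammaComp A ξ w = gammaSet A {u | ξ u = ξ v} w := by
    unfold GammaComp; rw [hset]
  rw [hΓ]
  ext u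
  constructor
  · intro hu
    exact connIn_trans h hu
  · intro hu
    exact connIn_trans (connIn_symm h) hu

lemma iota_eq {A : V → V → Prop} {ξ : V → W} {ι : GVert A ξ → W}
    (hι : ∀ v : V, ι (piMap A ξ v) = ξ v) (C : GVert A ξ) {a : V} (ha : a ∈ C.1) :
    ι C = ξ a := by
  obtain ⟨v, hv⟩ := C.2
  have hCa : C.1 = GammaComp A ξ a := by
    rw [hv]; exact (gammaComp_eq_of_mem (hv ▸ ha)).symm
  have : C = piMap A ξ a := Subtype.ext hCa
  rw [this, hι]

lemma gvert_mem_self {A : V → V → Prop} {ξ : V → W} (C : GVert A ξ) : ∃ a, a ∈ C.1 := by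
  obtain ⟨v, hv⟩ := C.2
  exact ⟨v, hv ▸ gammaComp_self v⟩

lemma garc_iota {A : V → V → Prop} {B : W → W → Prop} {ξ : V → W} (hξ : IsHom A B ξ)
    {ι : GVert A ξ → W} (hι : ∀ v : V, ι (piMap A ξ v) = ξ v)
    {C D : GVert A ξ} (h : GArc A ξ C D) : B (ι C) (ι D) := by
  obtain ⟨a, ha, b, hb, hab⟩ := h
  rw [iota_eq hι C ha, iota_eq hι D hb]
  exact hξ hab

lemma garc_eq_of_iota_eq {A : V → V → Prop} {ξ : V → W}
    {ι : GVert A ξ → W} (hι : ∀ v : V, ι (piMap A ξ v) = ξ v)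
    {C D : GVert A ξ} (h : GArc A ξ C D) (heq : ι C = ι D) : C = D := by
  obtain ⟨a, ha, b, hb, hab⟩ := h
  have hfib : ξ b = ξ a := by
    rw [← iota_eq hι C ha, ← iota_eq hι D hb, heq]
  have hmem : b ∈ GammaComp A ξ a := by
    refine ⟨1, fun i => if i = 0 then a else b, by simp, by simp, ?_, ?_⟩
    · intro i _
      by_cases h0 : i = 0 <;> simp [h0, hfib]
    · intro i hi
      have h0 : i = 0 := by omega
      simp [h0, DAdj, hab]
  obtain ⟨v, hv⟩ := C.2
  obtain ⟨u, hu⟩ := D.2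
  apply Subtype.ext
  rw [hv, hu]
  have ha' : a ∈ GammaComp A ξ v := hv ▸ ha
  have hb' : b ∈ GammaComp A ξ u := hu ▸ hb
  rw [← gammaComp_eq_of_mem ha', ← gammaComp_eq_of_mem hb']
  exact (gammaComp_eq_of_mem hmem).symm

lemma proper_concat {B : W → W → Prop} {a b c : W} {J1 J2 : ℕ} {w1 w2 : ℕ → W}
    (h10 : w1 0 = a) (h1J : w1 J1 = b)
    (h1s : ∀ i < J1, B (w1 i) (w1 (i + 1)) ∧ w1 i ≠ w1 (i + 1))
    (h20 : w2 0 = b) (h2J : w2 J2 = c)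
    (h2s : ∀ i < J2, B (w2 i) (w2 (i + 1)) ∧ w2 i ≠ w2 (i + 1)) :
    ∃ w : ℕ → W, w 0 = a ∧ w (J1 + J2) = c ∧
      ∀ i < J1 + J2, B (w i) (w (i + 1)) ∧ w i ≠ w (i + 1) := by
  refine ⟨fun i => if i < J1 then w1 i else w2 (i - J1), ?_, ?_, ?_⟩
  · by_cases h : 0 < J1
    · simp [h, h10]
    · have hJ : J1 = 0 := by omega
      simp only [h, if_neg]
      rw [hJ] at h1J
      simp [h20, ← h10, hJ, ← h1J]
  · have : ¬ J1 + J2 < J1 := by omega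
    beta_reduce
    rw [if_neg this, Nat.add_sub_cancel_left, h2J]
  · intro i hi
    beta_reduce
    by_cases h1 : i + 1 < J1
    · have h2 : i < J1 := by omega
      rw [if_pos h1, if_pos h2]
      exact h1s i h2
    · by_cases h2 : i < J1
      · have hI : i + 1 = J1 := by omega
        rw [if_pos h2, if_neg h1]
        have : i + 1 - J1 = 0 := by omega
        rw [this, h20, ← h1J, ← hI]
        exact h1s i h2
      · rw [if_neg h1, if_neg h2]
        have h3 : i + 1 - J1 = (i - J1) + 1 := by omega
        rw [h3]
        exact h2s (i - J1) (by omega)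

lemma walk_compress {B : W → W → Prop} :
    ∀ (I : ℕ) (z : ℕ → W), (∀ i < I, B (z i) (z (i + 1))) →
      z 0 = z I ∨ ∃ (J : ℕ) (w : ℕ → W), 0 < J ∧ w 0 = z 0 ∧ w J = z I ∧
        ∀ i < J, B (w i) (w (i + 1)) ∧ w i ≠ w (i + 1) := by
  intro I
  induction I with
  | zero => intro z _; exact Or.inl rfl
  | succ I ih =>
    intro z hz
    have htail := ih (fun i => z (i + 1)) (fun i hi => hz (i + 1) (by omega))
    rcases htail with h | ⟨J, w, hJ, hw0, hwJ, hws⟩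
    · have h : z 1 = z (I + 1) := h
      by_cases h01 : z 0 = z 1
      · exact Or.inl (h01.trans h)
      · refine Or.inr ⟨1, fun i => if i = 0 then z 0 else z (I + 1), one_pos, by simp, by simp, ?_⟩
        intro i hi
        have h0 : i = 0 := by omega
        subst h0
        simp only [if_pos rfl, if_neg one_ne_zero]
        refine ⟨?_, ?_⟩
        · rw [← h]; exact hz 0 (by omega)
        · rw [← h]; exact h01
    · have hw0 : w 0 = z 1 := hw0
      have hwJ : w J = z (I + 1) := hwJ
      by_cases h01 : z 0 = z 1
      · exact Or.inr ⟨J, w, hJ, by rw [hw0, ← h01], hwJ, hws⟩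
      · refine Or.inr ⟨J + 1, fun i => if i = 0 then z 0 else w (i - 1), by omega, by simp, ?_, ?_⟩
        · have : ¬ (J + 1 = 0) := by omega
          simp [this, hwJ]
        · intro i hi
          by_cases h0 : i = 0
          · subst h0
            simp only [if_pos rfl, if_neg one_ne_zero]
            have h11 : w (1 - 1) = z 1 := hw0
            constructor
            · rw [h11]; exact hz 0 (by omega)
            · rw [h11]; exact h01
          · have h1 : ¬ (i + 1 = 0) := by omega
            simp only [h0, h1, if_neg]
            have h2 : i + 1 - 1 = (i - 1) + 1 := by omega
            rw [h2]
            exact hws (i - 1) (by omega)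

lemma closed_walk_const {B : W → W → Prop} (hB : Ta B) (z : ℕ → W) (I : ℕ)
    (hw : ∀ i < I, B (z i) (z (i + 1))) (hc : z 0 = z I) : ∀ i ≤ I, z i = z 0 := by
  intro i hi
  by_contra hne
  -- prefix: walk from z 0 to z i
  have hpre := walk_compress i z (fun j hj => hw j (by omega))
  -- suffix: walk from z i to z I = z 0
  have hsuf := walk_compress (I - i) (fun j => z (i + j))
    (fun j hj => hw (i + j) (by omega))
  rcases hpre with h | ⟨J1, w1, hJ1, hw10, hw1J, hw1s⟩
  · exact hne h.symm
  have hIi : i + (I - i) = I := by omega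
  rcases hsuf with h | ⟨J2, w2, hJ2, hw20, hw2J, hw2s⟩
  · have h' : z (i + 0) = z (i + (I - i)) := h
    rw [Nat.add_zero, hIi] at h'
    exact hne (h'.trans hc.symm)
  have hw2J' : w2 J2 = z 0 := by
    have h' : w2 J2 = z (i + (I - i)) := hw2J
    rw [h', hIi, ← hc]
  have hw20' : w2 0 = z i := hw20
  obtain ⟨w, hw0, hwJ, hws⟩ := proper_concat hw10 hw1J hw1s hw20' hw2J' hw2s
  exact hB w (J1 + J2) (by omega) hws (by rw [hw0, hwJ])

end stmt7aux

/-- For `H ∈ T_a` and a homomorphism `ξ : G → H`: every walk `𝔠₀,…,𝔠_I` in `G_ξ`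
with `ι_ξ(𝔠₀) = ι_ξ(𝔠_I)` is trivial; in particular `G_ξ ∈ T_a`. -/
theorem stmt7 {V W : Type} [Finite V] [Nonempty V] [Finite W] [Nonempty W]
    (A : V → V → Prop) (B : W → W → Prop) (hB : Ta B)
    (ξ : V → W) (hξ : IsHom A B ξ)
    (ι : GVert A ξ → W) (hι : ∀ v : V, ι (piMap A ξ v) = ξ v) :
    (∀ (c : ℕ → GVert A ξ) (I : ℕ),
      (∀ i < I, GArc A ξ (c i) (c (i + 1))) → ι (c 0) = ι (c I) →
        ∀ i ≤ I, c i = c 0) ∧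
    Ta (GArc A ξ) := by
  have main : ∀ (c : ℕ → GVert A ξ) (I : ℕ),
      (∀ i < I, GArc A ξ (c i) (c (i + 1))) → ι (c 0) = ι (c I) →
        ∀ i ≤ I, c i = c 0 := by
    intro c I hc hclosed i hi
    have hzwalk : ∀ j < I, B (ι (c j)) (ι (c (j + 1))) :=
      fun j hj => garc_iota hξ hι (hc j hj)
    have hconst : ∀ j ≤ I, ι (c j) = ι (c 0) :=
      closed_walk_const hB (fun j => ι (c j)) I hzwalk hclosed
    clear hclosed
    induction i with
    | zero => rfl
    | succ i ih =>
      have hi' : i ≤ I := by omega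
      have hci : c i = c 0 := ih hi'
      have harc : GArc A ξ (c i) (c (i + 1)) := hc i (by omega)
      have heq : ι (c i) = ι (c (i + 1)) := by
        rw [hconst i hi', hconst (i + 1) hi]
      exact (garc_eq_of_iota_eq hι harc heq).symm.trans hci
  refine ⟨main, ?_⟩
  intro c I hI hsteps hcontra
  have : ∀ i ≤ I, c i = c 0 := by
    apply main c I (fun i hi => (hsteps i hi).1)
    rw [hcontra]
  have h1 : c 1 = c 0 := this 1 (by omega)
  exact (hsteps 0 hI).2 (h1.symm ▸ rfl)
end

section
/- Let R ∈ T_a and let D' be a class of finite digraphs with T_a ⊆ D'. Then for every finite digraph S: R ⊑_Γ S with respect to D' if and only if #S(G,R) ≤ #S(G,S) for every G ∈ D'. -/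
namespace Stmt10Aux

variable {V W VR VS : Type}

theorem connIn_self {A : V → V → Prop} {X : Set V} {v : V} (hv : v ∈ X) :
    ConnIn A X v v :=
  ⟨0, fun _ => v, rfl, rfl, fun _ _ => hv, fun i hi => absurd hi (Nat.not_lt_zero i)⟩

theorem connIn_mem_right {A : V → V → Prop} {X : Set V} {v w : V}
    (h : ConnIn A X v w) : w ∈ X := by
  obtain ⟨I, z, h0, hI, hmem, -⟩ := h
  exact hI ▸ hmem I le_rfl

theorem connIn_symm {A : V → V → Prop} {X : Set V} {v w : V}
    (h : ConnIn A X v w) : ConnIn A X w v := by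
  obtain ⟨I, z, h0, hI, hmem, hadj⟩ := h
  refine ⟨I, fun i => z (I - i), by simpa using hI, by simpa using h0,
    fun i hi => hmem _ (by omega), fun i hi => ?_⟩
  have h1 : I - i = (I - (i + 1)) + 1 := by omega
  show DAdj A (z (I - i)) (z (I - (i + 1)))
  rw [h1]
  exact Or.symm (hadj _ (by omega))

theorem connIn_trans {A : V → V → Prop} {X : Set V} {u v w : V}
    (h1 : ConnIn A X u v) (h2 : ConnIn A X v w) : ConnIn A X u w := by
  obtain ⟨I, z, hz0, hzI, hzm, hza⟩ := h1
  obtain ⟨J, y, hy0, hyJ, hym, hya⟩ := h2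
  refine ⟨I + J, fun i => if i ≤ I then z i else y (i - I), by simp [hz0], ?_, ?_, ?_⟩
  · by_cases hJ : J = 0
    · subst hJ
      simp only [Nat.add_zero, le_refl, if_pos]
      rw [hzI, ← hy0, ← hyJ]
    · have hc : ¬ (I + J ≤ I) := by omega
      simp only [hc, if_neg, Nat.add_sub_cancel_left]
      exact hyJ
  · intro i hi
    by_cases hc : i ≤ I
    · simp only [hc, if_pos]; exact hzm i hc
    · simp only [hc, if_neg]; exact hym _ (by omega)
  · intro i hi
    rcases lt_trichotomy i I with hlt | heq | hgt
    · have hc1 : i ≤ I := le_of_lt hlt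
      have hc2 : i + 1 ≤ I := hlt
      simp only [hc1, hc2, if_pos]
      exact hza i hlt
    · subst heq
      have hc2 : ¬ (i + 1 ≤ i) := by omega
      simp only [le_refl, if_pos, hc2, if_neg, Nat.add_sub_cancel_left]
      rw [hzI, ← hy0]
      exact hya 0 (by omega)
    · have hc1 : ¬ (i ≤ I) := by omega
      have hc2 : ¬ (i + 1 ≤ I) := by omega
      simp only [hc1, hc2, if_neg]
      have h3 : i + 1 - I = (i - I) + 1 := by omega
      rw [h3]
      exact hya (i - I) (by omega)

theorem mem_gamma_self {A : V → V → Prop} (ξ : V → W) (v : V) :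
    v ∈ GammaComp A ξ v :=
  connIn_self rfl

theorem gamma_fiber {A : V → V → Prop} {ξ : V → W} {v w : V}
    (h : w ∈ GammaComp A ξ v) : ξ w = ξ v := by
  have h' : ConnIn A {u | ξ u = ξ v} v w := h
  have h2 : w ∈ {u | ξ u = ξ v} := connIn_mem_right h'
  exact h2

theorem gamma_eq_of_mem {A : V → V → Prop} {ξ : V → W} {v w : V}
    (h : w ∈ GammaComp A ξ v) : GammaComp A ξ w = GammaComp A ξ v := by
  have hf : ξ w = ξ v := gamma_fiber h
  have hX : {u | ξ u = ξ w} = {u | ξ u = ξ v} := by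
    ext u; simp only [Set.mem_setOf_eq, hf]
  have h' : ConnIn A {u | ξ u = ξ v} v w := h
  ext u
  constructor
  · intro hu
    have hu' : ConnIn A {x | ξ x = ξ v} w u := by
      have : ConnIn A {x | ξ x = ξ w} w u := hu
      rwa [hX] at this
    exact connIn_trans h' hu'
  · intro hu
    have hu' : ConnIn A {x | ξ x = ξ v} v u := hu
    show ConnIn A {x | ξ x = ξ w} w u
    rw [hX]
    exact connIn_trans (connIn_symm h') hu'

theorem adj_mem_gamma {A : V → V → Prop} {ξ : V → W} {v w : V}
    (hadj : DAdj A v w) (hf : ξ w = ξ v) : w ∈ GammaComp A ξ v := by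
  refine ⟨1, fun i => if i = 0 then v else w, by simp, by simp, ?_, ?_⟩
  · intro i hi
    interval_cases i
    · simp
    · simpa using hf
  · intro i hi
    have : i = 0 := by omega
    subst this
    simpa using hadj

/-- The quotient vertex type, parametrized by an abstract component map `g`. -/
def QV (g : V → Set V) : Type := {C : Set V // ∃ v, C = g v}

/-- The quotient arc relation. -/
def QA (A : V → V → Prop) (g : V → Set V) : QV g → QV g → Prop :=
  fun C D => ∃ a ∈ C.1, ∃ b ∈ D.1, A a b

/-- The canonical projection. -/
def qpi (g : V → Set V) (v : V) : QV g := ⟨g v, v, rfl⟩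

/-- The induced map on the quotient. -/
noncomputable def qbar (g : V → Set V) (ξ : V → W) (C : QV g) : W :=
  ξ C.2.choose

theorem qpi_surj (g : V → Set V) : Function.Surjective (qpi g) := by
  intro C
  exact ⟨C.2.choose, Subtype.ext C.2.choose_spec.symm⟩

theorem qbar_eq {A : V → V → Prop} {ξ : V → W}
    {C : QV (fun v => GammaComp A ξ v)} {a : V} (ha : a ∈ C.1) :
    qbar (fun v => GammaComp A ξ v) ξ C = ξ a := by
  have hs := C.2.choose_spec
  rw [hs] at ha
  exact (gamma_fiber ha).symm

theorem class_eq {A : V → V → Prop} {ξ : V → W}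
    {C : QV (fun v => GammaComp A ξ v)} {a : V} (ha : a ∈ C.1) :
    C.1 = GammaComp A ξ a := by
  have hs := C.2.choose_spec
  rw [hs] at ha ⊢
  exact (gamma_eq_of_mem ha).symm

theorem qpi_mem {A : V → V → Prop} {ξ : V → W} (v : V) :
    v ∈ (qpi (fun v => GammaComp A ξ v) v).1 :=
  mem_gamma_self ξ v

theorem qpi_hom {A : V → V → Prop} {ξ : V → W} :
    IsHom A (QA A (fun v => GammaComp A ξ v)) (qpi (fun v => GammaComp A ξ v)) :=
  fun v w h => ⟨v, qpi_mem v, w, qpi_mem w, h⟩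

theorem qbar_hom {A : V → V → Prop} {R : VR → VR → Prop} {ξ : V → VR}
    (hξ : IsHom A R ξ) :
    IsHom (QA A (fun v => GammaComp A ξ v)) R (qbar (fun v => GammaComp A ξ v) ξ) := by
  rintro C D ⟨a, ha, b, hb, hab⟩
  rw [qbar_eq ha, qbar_eq hb]
  exact hξ hab

theorem qbar_strict {A : V → V → Prop} {R : VR → VR → Prop} {ξ : V → VR}
    (hξ : IsHom A R ξ) :
    IsStrictHom (QA A (fun v => GammaComp A ξ v)) R (qbar (fun v => GammaComp A ξ v) ξ) := by
  refine ⟨qbar_hom hξ, ?_⟩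
  rintro C D ⟨a, ha, b, hb, hab⟩ hCD hbar
  apply hCD
  rw [qbar_eq ha, qbar_eq hb] at hbar
  have hb' : b ∈ GammaComp A ξ a := adj_mem_gamma (Or.inl hab) hbar.symm
  apply Subtype.ext
  rw [class_eq ha, class_eq hb]
  exact (gamma_eq_of_mem hb').symm

theorem ta_quotient {A : V → V → Prop} {R : VR → VR → Prop} {ξ : V → VR}
    (hR : Ta R) (hξ : IsHom A R ξ) : Ta (QA A (fun v => GammaComp A ξ v)) := by
  intro z I hI hz h0I
  have hs := qbar_strict (A := A) hξ
  refine hR (fun i => qbar (fun v => GammaComp A ξ v) ξ (z i)) I hI ?_ ?_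
  · intro i hi
    obtain ⟨harc, hne⟩ := hz i hi
    exact ⟨hs.1 harc, hs.2 harc hne⟩
  · exact congrArg _ h0I

theorem qbar_qpi {A : V → V → Prop} {ξ : V → W} {g : V → Set V}
    (hg : g = fun v => GammaComp A ξ v) (v : V) :
    qbar g ξ (qpi g v) = ξ v := by
  subst hg
  exact qbar_eq (qpi_mem v)

/-- Composition with a strict hom on the quotient preserves Γ-components. -/
theorem comp_gamma {A : V → V → Prop} {ξ : V → W} {W' : Type} {B' : W' → W' → Prop}
    {η : QV (fun v => GammaComp A ξ v) → W'}
    (hη : IsStrictHom (QA A (fun v => GammaComp A ξ v)) B' η) (v : V) :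
    GammaComp A (fun u => η (qpi (fun v => GammaComp A ξ v) u)) v = GammaComp A ξ v := by
  ext w
  constructor
  · rintro ⟨I, z, h0, hI, hmem, hadj⟩
    have key : ∀ i, i ≤ I →
        qpi (fun v => GammaComp A ξ v) (z i) = qpi (fun v => GammaComp A ξ v) v := by
      intro i
      induction i with
      | zero => intro _; rw [h0]
      | succ n ih =>
        intro hn
        have hpn := ih (by omega)
        have hadj' := hadj n (by omega)
        by_contra hne
        have hne' : qpi (fun v => GammaComp A ξ v) (z (n + 1)) ≠
            qpi (fun v => GammaComp A ξ v) (z n) := by rw [hpn]; exact hne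
        have hfn : η (qpi (fun v => GammaComp A ξ v) (z n)) =
            η (qpi (fun v => GammaComp A ξ v) (z (n + 1))) := by
          have e1 : η (qpi (fun v => GammaComp A ξ v) (z n)) =
              η (qpi (fun v => GammaComp A ξ v) v) := hmem n (by omega)
          have e2 : η (qpi (fun v => GammaComp A ξ v) (z (n + 1))) =
              η (qpi (fun v => GammaComp A ξ v) v) := hmem (n + 1) hn
          rw [e1, e2]
        cases hadj' with
        | inl h =>
          exact hη.2 ⟨z n, qpi_mem (z n), z (n + 1), qpi_mem (z (n + 1)), h⟩
            (Ne.symm hne') hfn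
        | inr h =>
          exact hη.2 ⟨z (n + 1), qpi_mem (z (n + 1)), z n, qpi_mem (z n), h⟩
            hne' hfn.symm
    have hqw : qpi (fun v => GammaComp A ξ v) w = qpi (fun v => GammaComp A ξ v) v :=
      hI ▸ key I le_rfl
    have hgw : GammaComp A ξ w = GammaComp A ξ v := congrArg Subtype.val hqw
    exact hgw ▸ mem_gamma_self ξ w
  · rintro ⟨I, z, h0, hI, hmem, hadj⟩
    refine ⟨I, z, h0, hI, ?_, hadj⟩
    intro i hi
    have hzi : z i ∈ GammaComp A ξ v :=
      ⟨i, z, h0, rfl, fun j hj => hmem j (le_trans hj hi),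
        fun j hj => hadj j (lt_of_lt_of_le hj hi)⟩
    show η (qpi (fun v => GammaComp A ξ v) (z i)) = η (qpi (fun v => GammaComp A ξ v) v)
    exact congrArg η (Subtype.ext (gamma_eq_of_mem hzi))

/-- Key injectivity step, with the component maps generalized. -/
theorem inj_step {A : V → V → Prop} {R : VR → VR → Prop} {S : VS → VS → Prop}
    (Hyp : (V → Set V) → Prop)
    (jfun : ∀ g, Hyp g → (StrictHomSet (QA A g) R → StrictHomSet (QA A g) S))
    (hjinj : ∀ g h, Function.Injective (jfun g h))
    (ξ₁ ξ₂ : V → VR) (g₁ g₂ : V → Set V)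
    (hg₁ : g₁ = fun v => GammaComp A ξ₁ v) (hg₂ : g₂ = fun v => GammaComp A ξ₂ v)
    (hg : g₁ = g₂)
    (p₁ : Hyp g₁) (p₂ : Hyp g₂)
    (B₁ : StrictHomSet (QA A g₁) R) (B₂ : StrictHomSet (QA A g₂) R)
    (hB₁ : B₁.1 = qbar g₁ ξ₁) (hB₂ : B₂.1 = qbar g₂ ξ₂)
    (h : ∀ u, (jfun g₁ p₁ B₁).1 (qpi g₁ u) = (jfun g₂ p₂ B₂).1 (qpi g₂ u)) :
    ξ₁ = ξ₂ := by
  subst hg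
  have hp : p₁ = p₂ := rfl
  subst hp
  have hfeq : (jfun g₁ p₁ B₁).1 = (jfun g₁ p₁ B₂).1 := by
    funext C
    obtain ⟨v, rfl⟩ := qpi_surj g₁ C
    exact h v
  have hB : B₁ = B₂ := hjinj g₁ p₁ (Subtype.ext hfeq)
  funext v
  rw [← qbar_qpi hg₁ v, ← qbar_qpi hg₂ v, ← hB₁, ← hB₂, hB]

end Stmt10Aux

/-- For `R ∈ T_a` and a class `D'` of finite digraphs with `T_a ⊆ D'`:
`R ⊑_Γ S` with respect to `D'` iff `#S(G,R) ≤ #S(G,S)` for every `G ∈ D'`. -/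
theorem stmt10 {VR : Type} [Finite VR] [Nonempty VR] (R : VR → VR → Prop)
    (hR : Ta R)
    (D' : (V : Type) → (V → V → Prop) → Prop)
    (hTa : ∀ (V : Type) [Finite V] [Nonempty V] (A : V → V → Prop), Ta A → D' V A)
    {VS : Type} [Finite VS] [Nonempty VS] (S : VS → VS → Prop) :
    SqGamma D' R S ↔
      ∀ (V : Type) [Finite V] [Nonempty V] (A : V → V → Prop), D' V A →
        Nat.card (StrictHomSet A R) ≤ Nat.card (StrictHomSet A S) := by
  open Stmt10Aux in
  classical
  constructor
  · -- forward direction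
    intro hsq V _ _ A hD
    obtain ⟨ρ, hρinj, hρΓ⟩ := hsq V A hD
    have hfin : Finite (StrictHomSet A S) := by unfold StrictHomSet; infer_instance
    have hσ : ∃ σ : StrictHomSet A R → StrictHomSet A S, Function.Injective σ := by
      refine ⟨fun η => ⟨(ρ ⟨η.1, η.2.1⟩).1, (ρ ⟨η.1, η.2.1⟩).2, ?_⟩, ?_⟩
      · intro v w hvw hne heq
        have hmem : w ∈ GammaComp A (ρ ⟨η.1, η.2.1⟩).1 v :=
          adj_mem_gamma (Or.inl hvw) heq.symm
        rw [hρΓ ⟨η.1, η.2.1⟩ v] at hmem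
        exact η.2.2 hvw hne (gamma_fiber hmem).symm
      · intro η₁ η₂ heq
        have h0 := congrArg Subtype.val heq
        have h1 : (ρ ⟨η₁.1, η₁.2.1⟩).1 = (ρ ⟨η₂.1, η₂.2.1⟩).1 := h0
        have h2 : (⟨η₁.1, η₁.2.1⟩ : HomSet A R) = ⟨η₂.1, η₂.2.1⟩ :=
          hρinj (Subtype.ext h1)
        have h3 := congrArg Subtype.val h2
        exact Subtype.ext h3
    obtain ⟨σ, hσ⟩ := hσ
    exact Nat.card_le_card_of_injective σ hσ
  · -- backward direction
    intro hcard V _ _ A hD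
    have hP : ∀ g : V → Set V,
        (∃ ξ : V → VR, IsHom A R ξ ∧ g = fun v => GammaComp A ξ v) →
        ∃ j : StrictHomSet (QA A g) R → StrictHomSet (QA A g) S,
          Function.Injective j := by
      rintro g ⟨ξ, hξ, rfl⟩
      haveI h1 : Finite (QV (fun v => GammaComp A ξ v)) := by
        unfold Stmt10Aux.QV; infer_instance
      haveI h2 : Nonempty (QV (fun v => GammaComp A ξ v)) :=
        ⟨qpi _ (Classical.arbitrary V)⟩
      have hta : Ta (QA A (fun v => GammaComp A ξ v)) := ta_quotient hR hξ
      have hle := hcard (QV (fun v => GammaComp A ξ v))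
        (QA A (fun v => GammaComp A ξ v)) (hTa _ _ hta)
      haveI hfR : Fintype (StrictHomSet (QA A (fun v => GammaComp A ξ v)) R) := by
        unfold StrictHomSet; exact Fintype.ofFinite _
      haveI hfS : Fintype (StrictHomSet (QA A (fun v => GammaComp A ξ v)) S) := by
        unfold StrictHomSet; exact Fintype.ofFinite _
      rw [Nat.card_eq_fintype_card, Nat.card_eq_fintype_card] at hle
      obtain ⟨e⟩ := Function.Embedding.nonempty_of_card_le hle
      exact ⟨e, e.injective⟩
    choose jfun hjinj using hP
    refine ⟨fun ξ =>
      ⟨fun u => (jfun (fun v => GammaComp A ξ.1 v) ⟨ξ.1, ξ.2, rfl⟩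
          ⟨qbar (fun v => GammaComp A ξ.1 v) ξ.1, qbar_strict ξ.2⟩).1
          (qpi (fun v => GammaComp A ξ.1 v) u),
       fun v w hvw => (jfun (fun v => GammaComp A ξ.1 v) ⟨ξ.1, ξ.2, rfl⟩
          ⟨qbar (fun v => GammaComp A ξ.1 v) ξ.1, qbar_strict ξ.2⟩).2.1
          (qpi_hom hvw)⟩, ?_, ?_⟩
    · -- injectivity
      intro ξ₁ ξ₂ h
      have hpres : ∀ (ξ : HomSet A R) (v : V),
          GammaComp A (fun u => (jfun (fun v => GammaComp A ξ.1 v) ⟨ξ.1, ξ.2, rfl⟩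
            ⟨qbar (fun v => GammaComp A ξ.1 v) ξ.1, qbar_strict ξ.2⟩).1
            (qpi (fun v => GammaComp A ξ.1 v) u)) v = GammaComp A ξ.1 v := by
        intro ξ v
        exact comp_gamma (jfun (fun v => GammaComp A ξ.1 v) ⟨ξ.1, ξ.2, rfl⟩
          ⟨qbar (fun v => GammaComp A ξ.1 v) ξ.1, qbar_strict ξ.2⟩).2 v
      have h1 : ∀ v, GammaComp A ξ₁.1 v = GammaComp A ξ₂.1 v := by
        intro v
        rw [← hpres ξ₁ v, ← hpres ξ₂ v]
        have := congrArg Subtype.val h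
        simp only at this
        rw [this]
      have hg : (fun v => GammaComp A ξ₁.1 v) = (fun v => GammaComp A ξ₂.1 v) :=
        funext h1
      apply Subtype.ext
      refine inj_step _ jfun hjinj ξ₁.1 ξ₂.1 _ _ rfl rfl hg
        ⟨ξ₁.1, ξ₁.2, rfl⟩ ⟨ξ₂.1, ξ₂.2, rfl⟩
        ⟨qbar (fun v => GammaComp A ξ₁.1 v) ξ₁.1, qbar_strict ξ₁.2⟩
        ⟨qbar (fun v => GammaComp A ξ₂.1 v) ξ₂.1, qbar_strict ξ₂.2⟩
        rfl rfl ?_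
      intro u
      exact congrArg (fun f => f.1 u) h
    · -- Γ-preservation
      intro ξ v
      exact comp_gamma (jfun (fun v => GammaComp A ξ.1 v) ⟨ξ.1, ξ.2, rfl⟩
        ⟨qbar (fun v => GammaComp A ξ.1 v) ξ.1, qbar_strict ξ.2⟩).2 v
end
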